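/- For every ω₁-tree T and n ≥ 1: T is n-entangled if and only if for every injective c⃗ ∈ T^n and every ω₁-sequence ⟨(a_{ξ,0},…,a_{ξ,n−1}) : ξ < ω₁⟩ of n-tuples above c⃗ with increasing height, for every g : n → 2 there exist ξ < β with a_{ξ,i} <_T a_{β,i} iff g(i) = 1 for all i < n. -/

import Mathlib

noncomputable section

def omega1 : Ordinal.{0} := (Cardinal.aleph 1).ord

/-- A tree presented by a partial order together with a height function `ht` into the
ordinals: heights are strictly monotone, the predecessors of any node form a chain, and
below any node there is a (necessarily unique) predecessor of each smaller height.
These axioms say exactly that the set of strict predecessors of `x` is well-ordered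
with order type `ht x`. -/
structure TreeSystem (T : Type*) [PartialOrder T] where
  ht : T → Ordinal.{0}
  ht_strictMono : ∀ {x y : T}, x < y → ht x < ht y
  pred_chain : ∀ x y z : T, y < x → z < x → y ≤ z ∨ z ≤ y
  pred_exists : ∀ x : T, ∀ o, o < ht x → ∃ z, z < x ∧ ht z = o

variable {T : Type*} [PartialOrder T]

/-- An antichain in the tree sense: pairwise incomparable. -/
def IsTreeAntichain (A : Set T) : Prop :=
  ∀ x ∈ A, ∀ y ∈ A, x ≠ y → ¬ x ≤ y ∧ ¬ y ≤ x

/-- An antichain of the forcing poset `P_T` (whose order is the reverse of the tree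
order): pairwise incompatible, i.e. no two distinct members have a common upper bound
in the tree order. -/
def IsForcingAntichain (A : Set T) : Prop :=
  ∀ p ∈ A, ∀ q ∈ A, p ≠ q → ¬ ∃ r : T, p ≤ r ∧ q ≤ r

def NoUncountableChain (T : Type*) [PartialOrder T] : Prop :=
  ¬ ∃ C : Set T, IsChain (· ≤ ·) C ∧ ¬ C.Countable

def NoUncountableAntichain (T : Type*) [PartialOrder T] : Prop :=
  ¬ ∃ A : Set T, IsTreeAntichain A ∧ ¬ A.Countable

/-- A tree is special if it carries a function to `ω` taking distinct values on
comparable pairs. -/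
def SpecialTree (T : Type*) [PartialOrder T] : Prop :=
  ∃ f : T → ℕ, ∀ x y : T, x < y → f x ≠ f y

namespace TreeSystem

/-- An ω₁-tree: all nodes have height `< ω₁`, all levels are countable, and
the height of the tree is ω₁ (all levels below ω₁ are nonempty). -/
def IsOmegaOneTree (S : TreeSystem T) : Prop :=
  (∀ x : T, S.ht x < omega1) ∧
  (∀ o : Ordinal, {x : T | S.ht x = o}.Countable) ∧
  (∀ o, o < omega1 → ∃ x : T, S.ht x = o)

/-- A Suslin tree: an ω₁-tree with no uncountable chain and no uncountable antichain. -/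
def IsSuslin (S : TreeSystem T) : Prop :=
  S.IsOmegaOneTree ∧ NoUncountableChain T ∧ NoUncountableAntichain T

/-- An Aronszajn tree: an ω₁-tree with no uncountable chain. -/
def IsAronszajn (S : TreeSystem T) : Prop :=
  S.IsOmegaOneTree ∧ NoUncountableChain T

/-- A special ω₁-tree. -/
def IsSpecial (S : TreeSystem T) : Prop :=
  S.IsOmegaOneTree ∧ SpecialTree T

/-- `Δ(x,y)`: the order type of the set `{z : z ≤ x and z ≤ y}` of common lower
bounds, computed as the supremum of `ht z + 1` over that (downward closed) chain. -/
def Delta (S : TreeSystem T) (x y : T) : Ordinal :=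
  sSup ((fun z => S.ht z + 1) '' {z : T | z ≤ x ∧ z ≤ y})

/-- The height of the tree: the least ordinal which is not the height of a node. -/
def height (S : TreeSystem T) : Ordinal :=
  sSup (Set.range fun x : T => S.ht x + 1)

/-- Normality for a tree of height ω₁ (so that every node has nodes of every
larger height `< ω₁` above it and splits): (a) every node has two incomparable nodes
above it; (b) every node has nodes above it at every height `< ω₁`; (c) two nodes of
the same non-successor (i.e. zero or limit) height with the same predecessors
are equal. -/
def IsNormal (S : TreeSystem T) : Prop :=
  (∀ x : T, ∃ y z : T, x < y ∧ x < z ∧ ¬ y ≤ z ∧ ¬ z ≤ y) ∧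
  (∀ x : T, ∀ o, S.ht x ≤ o → o < omega1 → ∃ y, x ≤ y ∧ S.ht y = o) ∧
  (∀ x y : T, S.ht x = S.ht y → (∀ p, S.ht x ≠ p + 1) →
    (∀ z : T, z < x ↔ z < y) → x = y)

/-- Normality for a tree of arbitrary height `S.height`. -/
def IsNormalGen (S : TreeSystem T) : Prop :=
  (∀ x : T, S.ht x + 1 < S.height → ∃ y z : T, x < y ∧ x < z ∧ ¬ y ≤ z ∧ ¬ z ≤ y) ∧
  (∀ x : T, ∀ o, S.ht x ≤ o → o < S.height → ∃ y, x ≤ y ∧ S.ht y = o) ∧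
  (∀ x y : T, S.ht x = S.ht y → (∀ p, S.ht x ≠ p + 1) →
    (∀ z : T, z < x ↔ z < y) → x = y)

/-- The set of immediate successors of `x`. -/
def ImmSucc (S : TreeSystem T) (x : T) : Set T :=
  {y : T | x < y ∧ S.ht y = S.ht x + 1}

/-- `T` has rational successors, as witnessed by the position function `q`: for each
node `x`, `q` is injective on the immediate successors of `x` and induces on them a
linear order isomorphic to the rationals. -/
def RationalSuccessors (S : TreeSystem T) (q : T → ℚ) : Prop :=
  ∀ x : T, Set.InjOn q (S.ImmSucc x) ∧ Nonempty ((q '' S.ImmSucc x) ≃o ℚ)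

/-- The lexicographical order on the nodes of a tree with rational successors:
`a <_S b` iff `a <_T b`, or `a, b` are incomparable and the immediate successor `y`
(of their maximal common predecessor `x`) below `a` precedes the one `z` below `b`
in the rational ordering of the successors of `x`. -/
def LexLt (S : TreeSystem T) (q : T → ℚ) (a b : T) : Prop :=
  a < b ∨ (¬ a ≤ b ∧ ¬ b ≤ a ∧ ∃ x y z : T,
    x < y ∧ x < z ∧ y ≤ a ∧ z ≤ b ∧
    S.ht y = S.ht x + 1 ∧ S.ht z = S.ht x + 1 ∧ q y < q z)

/-- Separability for the lexicographical order. -/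
def LexSeparable (S : TreeSystem T) (q : T → ℚ) : Prop :=
  ∃ D : Set T, D.Countable ∧ ∀ a b : T, S.LexLt q a b →
    (∃ c, S.LexLt q a c ∧ S.LexLt q c b) →
    ∃ d ∈ D, S.LexLt q a d ∧ S.LexLt q d b

/-- The countable chain condition for the lexicographical order: no uncountable family
of pairwise disjoint nonempty open intervals. -/
def LexCCC (S : TreeSystem T) (q : T → ℚ) : Prop :=
  ¬ ∃ I : Set (T × T), ¬ I.Countable ∧
    (∀ p ∈ I, ∃ c, S.LexLt q p.1 c ∧ S.LexLt q c p.2) ∧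
    (∀ p ∈ I, ∀ r ∈ I, p ≠ r →
      ¬ ∃ c, (S.LexLt q p.1 c ∧ S.LexLt q c p.2) ∧
             (S.LexLt q r.1 c ∧ S.LexLt q c r.2))

/-- The tree `T^n` of `n`-tuples of nodes of equal height, ordered coordinatewise
(as a subtype of the pointwise product order). -/
abbrev ProdTree (S : TreeSystem T) (n : ℕ) : Type _ :=
  {f : Fin n → T // ∀ i j : Fin n, S.ht (f i) = S.ht (f j)}

/-- `n`-entangledness of an ω₁-tree: every ω₁-sequence of pairwise disjoint injective
`n`-tuples with `{Δ(a_{ξ,i}, a_{ξ,j}) : i < j < n, ξ < ω₁}` bounded in ω₁ realizes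
every type `g : n → 2`, where `1` means `<_T` and `0` means `¬ <_T`. -/
def Entangled (S : TreeSystem T) (n : ℕ) : Prop :=
  ∀ a : Ordinal → ℕ → T,
    (∀ ξ, ξ < omega1 → ∀ i, i < n → ∀ j, j < n → i ≠ j → a ξ i ≠ a ξ j) →
    (∀ ξ, ξ < omega1 → ∀ δ, δ < omega1 → ξ ≠ δ →
      ∀ i, i < n → ∀ j, j < n → a ξ i ≠ a δ j) →
    (∃ β, β < omega1 ∧ ∀ ξ, ξ < omega1 → ∀ i j : ℕ, i < j → j < n →
      S.Delta (a ξ i) (a ξ j) ≤ β) →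
    ∀ g : ℕ → Bool, ∃ ξ β : Ordinal, ξ < β ∧ β < omega1 ∧
      ∀ i, i < n → (a ξ i < a β i ↔ g i = true)

end TreeSystem

end


noncomputable section Aux19

lemma aux_omega1_isLimit : Order.IsSuccLimit omega1 :=
  Cardinal.isSuccLimit_ord (Cardinal.aleph0_le_aleph 1)

lemma aux_succ_lt {o : Ordinal.{0}} (h : o < omega1) : o + 1 < omega1 := by
  rw [Ordinal.add_one_eq_succ]
  exact aux_omega1_isLimit.succ_lt h

lemma aux_countable_Iio {o : Ordinal.{0}} (h : o < omega1) :
    (Set.Iio o).Countable := by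
  rw [Cardinal.countable_iff_lt_aleph_one, Ordinal.mk_Iio_ordinal]
  rw [← not_le, Cardinal.aleph_one_le_lift, not_le]
  exact Cardinal.lt_ord.mp h

lemma aux_countable_Iic {o : Ordinal.{0}} (h : o < omega1) :
    (Set.Iic o).Countable := by
  refine Set.Countable.mono ?_ (aux_countable_Iio (aux_succ_lt h))
  intro x hx
  simp only [Set.mem_Iio, Set.mem_Iic] at *
  rw [Ordinal.add_one_eq_succ]
  exact hx.trans_lt (Order.lt_succ o)

lemma aux_uncountable_Iio : ¬ (Set.Iio omega1).Countable := by
  rw [Cardinal.countable_iff_lt_aleph_one, Ordinal.mk_Iio_ordinal, omega1,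
    Cardinal.card_ord]
  exact fun h => absurd (Cardinal.aleph_one_le_lift.mpr le_rfl) (not_le.mpr h)

variable {T : Type*} [PartialOrder T]

lemma aux_ht_mono (S : TreeSystem T) {x y : T} (h : x ≤ y) : S.ht x ≤ S.ht y := by
  rcases h.lt_or_eq with h' | rfl
  · exact (S.ht_strictMono h').le
  · rfl

lemma aux_eq_of_le_of_ht_eq (S : TreeSystem T) {x y : T} (h : x ≤ y)
    (hh : S.ht x = S.ht y) : x = y := by
  rcases h.lt_or_eq with h' | h'
  · exact absurd (S.ht_strictMono h') hh.not_lt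
  · exact h'

lemma aux_delta_le (S : TreeSystem T) {x y : T} {β : Ordinal}
    (hb : ∀ z : T, z ≤ x → z ≤ y → S.ht z + 1 ≤ β) : S.Delta x y ≤ β := by
  refine csSup_le' ?_
  rintro w ⟨z, ⟨hz1, hz2⟩, rfl⟩
  exact hb z hz1 hz2

lemma aux_le_delta (S : TreeSystem T) (hS : ∀ x : T, S.ht x < omega1) {x y z : T}
    (h1 : z ≤ x) (h2 : z ≤ y) : S.ht z + 1 ≤ S.Delta x y := by
  refine le_csSup ⟨omega1, ?_⟩ ⟨z, ⟨h1, h2⟩, rfl⟩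
  rintro w ⟨u, _, rfl⟩
  exact (aux_succ_lt (hS u)).le

/-- Countability of the set of indices with some low coordinate. -/
lemma aux_lowset_countable (S : TreeSystem T) (h : S.IsOmegaOneTree) (n : ℕ)
    (a : Ordinal → ℕ → T)
    (hdisj : ∀ ξ, ξ < omega1 → ∀ δ, δ < omega1 → ξ ≠ δ →
      ∀ i, i < n → ∀ j, j < n → a ξ i ≠ a δ j)
    {τ : Ordinal} (hτ : τ < omega1) :
    {ξ : Ordinal | ξ < omega1 ∧ ∃ i, i < n ∧ S.ht (a ξ i) ≤ τ}.Countable := by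
  have hL : {x : T | S.ht x ≤ τ}.Countable := by
    have he : {x : T | S.ht x ≤ τ} = ⋃ o ∈ Set.Iic τ, {x : T | S.ht x = o} := by
      ext x
      simp only [Set.mem_setOf_eq, Set.mem_iUnion, Set.mem_Iic, exists_prop]
      exact ⟨fun hx => ⟨S.ht x, hx, rfl⟩, fun ⟨o, ho, hx⟩ => hx ▸ ho⟩
    rw [he]
    exact Set.Countable.biUnion (aux_countable_Iic hτ) fun o _ => h.2.1 o
  have hsub : {ξ : Ordinal | ξ < omega1 ∧ ∃ i, i < n ∧ S.ht (a ξ i) ≤ τ} ⊆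
      ⋃ i ∈ Finset.range n, {ξ : Ordinal | ξ < omega1 ∧ S.ht (a ξ i) ≤ τ} := by
    rintro ξ ⟨hξ, i, hi, hle⟩
    exact Set.mem_biUnion (Finset.mem_coe.mpr (Finset.mem_range.mpr hi)) ⟨hξ, hle⟩
  refine Set.Countable.mono hsub ?_
  refine Set.Countable.biUnion (Finset.range n).countable_toSet fun i hi => ?_
  have hin : i < n := Finset.mem_range.mp hi
  refine Set.countable_of_injective_of_countable_image (f := fun ξ => a ξ i) ?_
    (Set.Countable.mono ?_ hL)
  · rintro ξ ⟨hξ, -⟩ δ ⟨hδ, -⟩ heq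
    by_contra hne
    exact hdisj ξ hξ δ hδ hne i hin i hin heq
  · rintro x ⟨ξ, ⟨-, hle⟩, rfl⟩
    exact hle

open Classical in
/-- Transfinite recursion choosing a strictly increasing sequence through `X`
respecting a relation `R`. -/
noncomputable def auxBFix (X : Set Ordinal.{0}) (R : Ordinal → Ordinal → Prop) :
    Ordinal → Ordinal :=
  Ordinal.lt_wf.fix fun η ih =>
    if hne : {ξ : Ordinal | ξ ∈ X ∧ ∀ ζ, ∀ hζ : ζ < η, ih ζ hζ < ξ ∧ R (ih ζ hζ) ξ}.Nonempty
    then hne.choose else 0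

open Classical in
lemma auxBFix_eq (X : Set Ordinal.{0}) (R : Ordinal → Ordinal → Prop) (η : Ordinal) :
    auxBFix X R η =
      if hne : {ξ : Ordinal | ξ ∈ X ∧ ∀ ζ, ζ < η →
          auxBFix X R ζ < ξ ∧ R (auxBFix X R ζ) ξ}.Nonempty
      then hne.choose else 0 :=
  Ordinal.lt_wf.fix_eq _ η

lemma auxBFix_mem (X : Set Ordinal.{0}) (hXc : ¬ X.Countable)
    (hXsub : X ⊆ Set.Iio omega1) (R : Ordinal → Ordinal → Prop)
    (hR : ∀ p, p < omega1 → {ξ : Ordinal | ξ ∈ X ∧ ¬ R p ξ}.Countable) :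
    ∀ η, η < omega1 → auxBFix X R η ∈ X ∧
      ∀ ζ, ζ < η → auxBFix X R ζ < auxBFix X R η ∧ R (auxBFix X R ζ) (auxBFix X R η) := by
  intro η
  induction η using Ordinal.induction with
  | _ η ih =>
    intro hη
    set b := auxBFix X R with hb
    have hbX : ∀ ζ, ζ < η → b ζ ∈ X := fun ζ hζ => (ih ζ hζ (hζ.trans hη)).1
    have hne : {ξ : Ordinal | ξ ∈ X ∧ ∀ ζ, ζ < η → b ζ < ξ ∧ R (b ζ) ξ}.Nonempty := by
      set bad : Set Ordinal :=
        ⋃ ζ ∈ Set.Iio η, (Set.Iic (b ζ) ∪ {ξ : Ordinal | ξ ∈ X ∧ ¬ R (b ζ) ξ}) with hbad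
      have hbadc : bad.Countable := by
        refine Set.Countable.biUnion (aux_countable_Iio hη) fun ζ hζ => ?_
        exact (aux_countable_Iic (hXsub (hbX ζ hζ))).union (hR (b ζ) (hXsub (hbX ζ hζ)))
      have hdiff : (X \ bad).Nonempty := by
        rw [Set.nonempty_iff_ne_empty]
        intro hemp
        exact hXc (Set.Countable.mono (Set.diff_eq_empty.mp hemp) hbadc)
      obtain ⟨ξ₀, hξX, hξbad⟩ := hdiff
      refine ⟨ξ₀, hξX, fun ζ hζ => ?_⟩
      have h1 : ξ₀ ∉ Set.Iic (b ζ) ∪ {ξ : Ordinal | ξ ∈ X ∧ ¬ R (b ζ) ξ} := by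
        intro hmem
        exact hξbad (Set.mem_biUnion hζ hmem)
      constructor
      · exact not_le.mp fun hle => h1 (Or.inl hle)
      · by_contra hnR
        exact h1 (Or.inr ⟨hξX, hnR⟩)
    have heq := auxBFix_eq X R η
    rw [← hb] at heq
    rw [heq, dif_pos hne]
    exact hne.choose_spec

end Aux19

/-- an ω₁-tree is `n`-entangled (for `n ≥ 1`) iff for every injective
equal-height tuple `c⃗` and every ω₁-sequence of `n`-tuples above `c⃗` with increasing
height, every type `g : n → 2` is realized by some pair of indices `ξ < β`. -/
theorem stmt19 {T : Type*} [PartialOrder T] (S : TreeSystem T)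
    (h : S.IsOmegaOneTree) (n : ℕ) (hn : 1 ≤ n) :
    S.Entangled n ↔
      ∀ c : ℕ → T,
        (∀ i, i < n → ∀ j, j < n → S.ht (c i) = S.ht (c j)) →
        (∀ i, i < n → ∀ j, j < n → i ≠ j → c i ≠ c j) →
        ∀ a : Ordinal → ℕ → T,
          (∀ ξ, ξ < omega1 → ∀ i, i < n → c i < a ξ i) →
          (∀ ξ δ : Ordinal, ξ < δ → δ < omega1 →
            ∀ i, i < n → ∀ j, j < n → S.ht (a ξ i) < S.ht (a δ j)) →
          ∀ g : ℕ → Bool, ∃ ξ β : Ordinal, ξ < β ∧ β < omega1 ∧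
            ∀ i, i < n → (a ξ i < a β i ↔ g i = true) := by
  constructor
  · -- forward direction
    intro hE c hce hcinj a habove hinc g
    have hcomp : ∀ i, i < n → ∀ j, j < n → i ≠ j → ∀ x : T, c i < x → c j < x → False := by
      intro i hi j hj hij x h1 h2
      have hcc : c i = c j := by
        rcases S.pred_chain x (c i) (c j) h1 h2 with hle | hle
        · exact aux_eq_of_le_of_ht_eq S hle (hce i hi j hj)
        · exact (aux_eq_of_le_of_ht_eq S hle (hce j hj i hi)).symm
      exact hcinj i hi j hj hij hcc
    have hinj : ∀ ξ, ξ < omega1 → ∀ i, i < n → ∀ j, j < n → i ≠ j → a ξ i ≠ a ξ j := by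
      intro ξ hξ i hi j hj hij heq
      have h1 : c i < a ξ i := habove ξ hξ i hi
      have h2 : c j < a ξ i := by
        have := habove ξ hξ j hj
        rwa [← heq] at this
      exact hcomp i hi j hj hij (a ξ i) h1 h2
    refine hE a hinj ?_ ?_ g
    · intro ξ hξ δ hδ hne i hi j hj heq
      rcases hne.lt_or_gt with hlt | hlt
      · have := hinc ξ δ hlt hδ i hi j hj
        rw [heq] at this
        exact lt_irrefl _ this
      · have := hinc δ ξ hlt hξ j hj i hi
        rw [heq] at this
        exact lt_irrefl _ this
    · refine ⟨S.ht (c 0) + 1, aux_succ_lt (h.1 _), ?_⟩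
      intro ξ hξ i j hij hj
      have hi : i < n := hij.trans hj
      have hne_ij : a ξ i ≠ a ξ j := hinj ξ hξ i hi j hj hij.ne
      have hci : c i < a ξ i := habove ξ hξ i hi
      have hcj : c j < a ξ j := habove ξ hξ j hj
      refine aux_delta_le S ?_
      intro z hz1 hz2
      have hkey : S.ht z ≤ S.ht (c 0) → S.ht z + 1 ≤ S.ht (c 0) + 1 := by
        intro hle
        rw [Ordinal.add_one_eq_succ, Ordinal.add_one_eq_succ]
        exact Order.succ_le_succ hle
      have hz1' : z < a ξ i := by
        rcases hz1.lt_or_eq with h' | h'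
        · exact h'
        · exfalso
          have hle : a ξ i ≤ a ξ j := h' ▸ hz2
          rcases hle.lt_or_eq with hlt | heq2
          · exact hcomp i hi j hj hij.ne (a ξ j) (hci.trans hlt) hcj
          · exact hne_ij heq2
      have hz2' : z < a ξ j := by
        rcases hz2.lt_or_eq with h' | h'
        · exact h'
        · exfalso
          have hle : a ξ j ≤ a ξ i := h' ▸ hz1
          rcases hle.lt_or_eq with hlt | heq2
          · exact hcomp i hi j hj hij.ne (a ξ i) hci (hcj.trans hlt)
          · exact hne_ij heq2.symm
      rcases S.pred_chain (a ξ i) z (c i) hz1' hci with hle | hle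
      · exact hkey ((aux_ht_mono S hle).trans (hce i hi 0 hn).le)
      · rcases S.pred_chain (a ξ j) z (c j) hz2' hcj with hle2 | hle2
        · exact hkey ((aux_ht_mono S hle2).trans (hce j hj 0 hn).le)
        · exact (hcomp i hi j hj hij.ne (a ξ i) hci (lt_of_le_of_lt hle2 hz1')).elim
  · -- backward direction
    intro hRHS a hinj hdisj hΔ g
    obtain ⟨β₀, hβ₀, hΔle⟩ := hΔ
    classical
    set P : Ordinal → ℕ → T := fun ξ i =>
      if hlt : β₀ < S.ht (a ξ i) then (S.pred_exists (a ξ i) β₀ hlt).choose else a ξ 0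
      with hPdef
    have hPspec : ∀ ξ i, β₀ < S.ht (a ξ i) → P ξ i < a ξ i ∧ S.ht (P ξ i) = β₀ := by
      intro ξ i hlt
      simp only [hPdef, dif_pos hlt]
      exact (S.pred_exists (a ξ i) β₀ hlt).choose_spec
    set X₀ : Set Ordinal := {ξ | ξ < omega1 ∧ ∀ i, i < n → β₀ < S.ht (a ξ i)} with hX₀def
    have hX₀unc : ¬ X₀.Countable := by
      intro hc
      apply aux_uncountable_Iio
      refine Set.Countable.mono ?_ (hc.union (aux_lowset_countable S h n a hdisj hβ₀))
      intro ξ hξ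
      by_cases hcase : ∀ i, i < n → β₀ < S.ht (a ξ i)
      · exact Or.inl ⟨hξ, hcase⟩
      · push_neg at hcase
        obtain ⟨i, hi, hle⟩ := hcase
        exact Or.inr ⟨hξ, i, hi, hle⟩
    set Φ : Ordinal → (Fin n → T) := fun ξ i => P ξ i.val with hΦdef
    set L : Set (Fin n → T) := {f | ∀ i, S.ht (f i) = β₀} with hLdef
    have hLc : L.Countable := by
      refine Set.Countable.mono ?_
        (Set.countable_univ_pi (s := fun _ : Fin n => {x : T | S.ht x = β₀})
          fun _ => h.2.1 β₀)
      exact fun f hf i _ => hf i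
    have hfiber : ∃ v ∈ L, ¬ (X₀ ∩ Φ ⁻¹' {v}).Countable := by
      by_contra hcon
      push_neg at hcon
      apply hX₀unc
      refine Set.Countable.mono ?_ (Set.Countable.biUnion hLc hcon)
      intro ξ hξ
      have hvL : Φ ξ ∈ L := fun i => (hPspec ξ i.val (hξ.2 i.val i.isLt)).2
      exact Set.mem_biUnion hvL ⟨hξ, rfl⟩
    obtain ⟨v, hvL, hXunc⟩ := hfiber
    have hXsub : X₀ ∩ Φ ⁻¹' {v} ⊆ Set.Iio omega1 := fun ξ hξ => hξ.1.1
    have hXne : (X₀ ∩ Φ ⁻¹' {v}).Nonempty :=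
      Set.nonempty_iff_ne_empty.mpr fun he => hXunc (he ▸ Set.countable_empty)
    have hXP : ∀ ξ ∈ X₀ ∩ Φ ⁻¹' {v}, ∀ i, ∀ hi : i < n, P ξ i = v ⟨i, hi⟩ := by
      intro ξ hξ i hi
      have hΦv : Φ ξ = v := hξ.2
      exact congrFun hΦv ⟨i, hi⟩
    set c : ℕ → T := fun i => if hi : i < n then v ⟨i, hi⟩ else v ⟨0, hn⟩ with hcdef
    have hceq : ∀ i, ∀ hi : i < n, c i = v ⟨i, hi⟩ := fun i hi => dif_pos hi
    have hcht : ∀ i, S.ht (c i) = β₀ := by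
      intro i
      by_cases hi : i < n
      · rw [hceq i hi]; exact hvL ⟨i, hi⟩
      · rw [hcdef]
        simp only [dif_neg hi]
        exact hvL ⟨0, hn⟩
    have hce : ∀ i, i < n → ∀ j, j < n → S.ht (c i) = S.ht (c j) :=
      fun i _ j _ => (hcht i).trans (hcht j).symm
    have habv : ∀ ξ ∈ X₀ ∩ Φ ⁻¹' {v}, ∀ i, ∀ hi : i < n, c i < a ξ i := by
      intro ξ hξ i hi
      rw [hceq i hi, ← hXP ξ hξ i hi]
      exact (hPspec ξ i (hξ.1.2 i hi)).1
    have hcinj : ∀ i, i < n → ∀ j, j < n → i ≠ j → c i ≠ c j := by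
      have key : ∀ i j, i < j → j < n → c i = c j → False := by
        intro i j hij hj hcc
        have hi : i < n := hij.trans hj
        obtain ⟨ξ, hξ⟩ := hXne
        have h1 := habv ξ hξ i hi
        have h2 := habv ξ hξ j hj
        rw [← hcc] at h2
        have hle : β₀ + 1 ≤ S.Delta (a ξ i) (a ξ j) := by
          have := aux_le_delta S h.1 h1.le h2.le
          rwa [hcht i] at this
        have hfin := hle.trans (hΔle ξ (hXsub hξ) i j hij hj)
        rw [Ordinal.add_one_eq_succ] at hfin
        exact absurd hfin (not_le.mpr (Order.lt_succ β₀))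
      intro i hi j hj hij hcc
      rcases hij.lt_or_gt with h' | h'
      · exact key i j h' hj hcc
      · exact key j i h' hi hcc.symm
    have hR : ∀ p, p < omega1 → {ξ : Ordinal | ξ ∈ X₀ ∩ Φ ⁻¹' {v} ∧
        ¬ (∀ i, i < n → ∀ j, j < n → S.ht (a p i) < S.ht (a ξ j))}.Countable := by
      intro p hp
      set τ : Ordinal := (Finset.range n).sup fun i => S.ht (a p i) with hτdef
      have hτ : τ < omega1 := by
        refine (Finset.sup_lt_iff ?_).mpr fun i _ => h.1 _
        exact aux_omega1_isLimit.pos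
      refine Set.Countable.mono ?_ (aux_lowset_countable S h n a hdisj hτ)
      rintro ξ ⟨hξX, hnR⟩
      push_neg at hnR
      obtain ⟨i, hi, j, hj, hle⟩ := hnR
      refine ⟨hXsub hξX, j, hj, hle.trans ?_⟩
      rw [hτdef]
      exact Finset.le_sup (f := fun k => S.ht (a p k)) (Finset.mem_range.mpr hi)
    have hb := auxBFix_mem (X₀ ∩ Φ ⁻¹' {v}) hXunc hXsub
      (fun p q => ∀ i, i < n → ∀ j, j < n → S.ht (a p i) < S.ht (a q j)) hR
    obtain ⟨ξ', β', h1, h2, h3⟩ := hRHS c hce hcinj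
      (fun η i => a (auxBFix (X₀ ∩ Φ ⁻¹' {v})
        (fun p q => ∀ i, i < n → ∀ j, j < n → S.ht (a p i) < S.ht (a q j)) η) i)
      (fun η hη i hi => habv _ (hb η hη).1 i hi)
      (fun ξ δ hξδ hδ i hi j hj => ((hb δ hδ).2 ξ hξδ).2 i hi j hj)
      g
    exact ⟨_, _, ((hb β' h2).2 ξ' h1).1, hXsub (hb β' h2).1, h3⟩
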